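/- Let 𝒜 be an abelian category with enough projectives, and let 𝒳 be a full additive subcategory containing the projectives. Then every bounded above complex of objects of 𝒳 is a DG-𝒳 complex, i.e. for every 𝒳-acyclic complex W, the Hom-complex Hom(X, W) is acyclic for every bounded above complex X with components in 𝒳. -/

import Mathlib

/-!
STATEMENT 5: Let `A` be an abelian category with enough projectives, and `X` a
full additive subcategory (given by a class `S` of objects) containing the
projectives.  Then every bounded above complex with components in `S` is a
DG-`X` complex: for every `S`-acyclic complex `W` (i.e. `Hom(T, W)` is acyclic
for all `T ∈ S`) and every `n : ℤ`, every chain map `Xc ⟶ W⟦n⟧` is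
null-homotopic (this is exactly the acyclicity of the total Hom-complex
`Hom(Xc, W)` in every degree).
-/

open CategoryTheory Limits

universe v u

variable {A : Type u} [Category.{v} A] [Abelian A]

lemma cycleAux (Xc V : CochainComplex A ℤ) (f : Xc ⟶ V) (i : ℤ)
    (t : Xc.X (i + 1) ⟶ V.X (i + 1 - 1)) (t' : Xc.X (i + 1 + 1) ⟶ V.X (i + 1))
    (hcomm : f.f (i + 1) = Xc.d (i + 1) (i + 1 + 1) ≫ t' + t ≫ V.d (i + 1 - 1) (i + 1)) :
    (f.f i - Xc.d i (i + 1) ≫ t ≫ (V.XIsoOfEq (show i + 1 - 1 = i by ring)).hom) ≫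
      V.d i (i + 1) = 0 := by
  have hf : f.f i ≫ V.d i (i + 1) = Xc.d i (i + 1) ≫ f.f (i + 1) := f.comm i (i + 1)
  have hiso : (t ≫ (V.XIsoOfEq (show i + 1 - 1 = i by ring)).hom) ≫ V.d i (i + 1) =
      t ≫ V.d (i + 1 - 1) (i + 1) := by
    simp only [Category.assoc, HomologicalComplex.XIsoOfEq_hom_comp_d]
  have h2 : t ≫ V.d (i + 1 - 1) (i + 1) = f.f (i + 1) - Xc.d (i + 1) (i + 1 + 1) ≫ t' :=
    eq_sub_of_add_eq ((add_comm _ _).trans hcomm.symm)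
  rw [Preadditive.sub_comp, Category.assoc, hiso, h2, hf]
  simp [Preadditive.comp_sub, HomologicalComplex.d_comp_d_assoc]

/-- Auxiliary: descending construction of a nullhomotopy. -/
noncomputable def auxHtpy (Xc V : CochainComplex A ℤ) (f : Xc ⟶ V) (b : ℤ)
    (hb : ∀ i : ℤ, b < i → IsZero (Xc.X i))
    (hlift : ∀ (i m : ℤ) (u : Xc.X i ⟶ V.X m), u ≫ V.d m (m + 1) = 0 →
      ∃ g : Xc.X i ⟶ V.X (m - 1), g ≫ V.d (m - 1) m = u) :
    ∀ i : ℤ, Σ' (s : Xc.X i ⟶ V.X (i - 1)) (s' : Xc.X (i + 1) ⟶ V.X i),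
      f.f i = Xc.d i (i + 1) ≫ s' + s ≫ V.d (i - 1) i := fun i =>
  if h : b < i then ⟨0, 0, (hb i h).eq_of_src _ _⟩
  else
    letI prev := auxHtpy Xc V f b hb hlift (i + 1)
    letI s' : Xc.X (i + 1) ⟶ V.X i :=
      prev.1 ≫ (V.XIsoOfEq (show i + 1 - 1 = i by ring)).hom
    ⟨(hlift i i (f.f i - Xc.d i (i + 1) ≫ s')
        (cycleAux Xc V f i prev.1 prev.2.1 prev.2.2)).choose,
      s',
      by
        rw [(hlift i i (f.f i - Xc.d i (i + 1) ≫ s')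
          (cycleAux Xc V f i prev.1 prev.2.1 prev.2.2)).choose_spec]
        abel⟩
  termination_by i => (b + 1 - i).toNat
  decreasing_by omega

lemma auxHtpy_comm (Xc V : CochainComplex A ℤ) (f : Xc ⟶ V) (b : ℤ)
    (hb : ∀ i : ℤ, b < i → IsZero (Xc.X i))
    (hlift : ∀ (i m : ℤ) (u : Xc.X i ⟶ V.X m), u ≫ V.d m (m + 1) = 0 →
      ∃ g : Xc.X i ⟶ V.X (m - 1), g ≫ V.d (m - 1) m = u) (i : ℤ) :
    f.f i = Xc.d i (i + 1) ≫ ((auxHtpy Xc V f b hb hlift (i + 1)).1 ≫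
        (V.XIsoOfEq (show i + 1 - 1 = i by ring)).hom) +
      (auxHtpy Xc V f b hb hlift i).1 ≫ V.d (i - 1) i := by
  by_cases h : b < i
  · exact (hb i h).eq_of_src _ _
  · rw [auxHtpy.eq_def Xc V f b hb hlift i, dif_neg h]
    dsimp only
    rw [(hlift i i (f.f i - Xc.d i (i + 1) ≫ (auxHtpy Xc V f b hb hlift (i + 1)).1 ≫
          (V.XIsoOfEq (show i + 1 - 1 = i by ring)).hom)
        (cycleAux Xc V f i (auxHtpy Xc V f b hb hlift (i + 1)).1
          (auxHtpy Xc V f b hb hlift (i + 1)).2.1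
          (auxHtpy Xc V f b hb hlift (i + 1)).2.2)).choose_spec]
    abel

theorem nullHomotopic (Xc V : CochainComplex A ℤ) (f : Xc ⟶ V) (b : ℤ)
    (hb : ∀ i : ℤ, b < i → IsZero (Xc.X i))
    (hlift : ∀ (i m : ℤ) (u : Xc.X i ⟶ V.X m), u ≫ V.d m (m + 1) = 0 →
      ∃ g : Xc.X i ⟶ V.X (m - 1), g ≫ V.d (m - 1) m = u) :
    Nonempty (Homotopy f 0) := by
  refine ⟨{
    hom := fun i j => if h : j = i - 1 then
      (auxHtpy Xc V f b hb hlift i).1 ≫ (V.XIsoOfEq h.symm).hom else 0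
    zero := fun i j h => dif_neg (by simp [ComplexShape.up] at h ⊢; omega)
    comm := fun i => ?_ }⟩
  rw [dNext_eq _ (show (ComplexShape.up ℤ).Rel i (i + 1) by simp),
    prevD_eq _ (show (ComplexShape.up ℤ).Rel (i - 1) i by simp)]
  rw [dif_pos (show i = i + 1 - 1 by ring), dif_pos rfl]
  have H := auxHtpy_comm Xc V f b hb hlift i
  simp only [HomologicalComplex.zero_f_apply, add_zero, HomologicalComplex.XIsoOfEq_rfl,
    Iso.refl_hom, Category.comp_id]
  exact H


theorem stmt5 {A : Type u} [Category.{v} A] [Abelian A] [EnoughProjectives A]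
    (S : Set A)
    (hzero : ∀ Z : A, IsZero Z → Z ∈ S)
    (hsum : ∀ X Y : A, X ∈ S → Y ∈ S → (X ⊞ Y) ∈ S)
    (hsummand : ∀ X Y : A, (X ⊞ Y) ∈ S → X ∈ S)
    (hproj : ∀ P : A, Projective P → P ∈ S)
    (Xc : CochainComplex A ℤ) (hXc : ∀ n : ℤ, Xc.X n ∈ S)
    (hbdd : ∃ b : ℤ, ∀ n : ℤ, b < n → IsZero (Xc.X n))
    (W : CochainComplex A ℤ)
    (hW : ∀ T ∈ S, ∀ (n : ℤ) (f : T ⟶ W.X n), f ≫ W.d n (n + 1) = 0 →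
      ∃ g : T ⟶ W.X (n - 1), g ≫ W.d (n - 1) n = f)
    (n : ℤ) (f : Xc ⟶ W⟦n⟧) :
    Nonempty (Homotopy f 0) := by
  obtain ⟨b, hb⟩ := hbdd
  apply nullHomotopic Xc (W⟦n⟧) f b hb
  intro i m u hu
  have hu' : u ≫ W.d (m + n) (m + n + 1) = 0 := by
    have h1 : (W⟦n⟧).d m (m + 1) = n.negOnePow • W.d (m + n) (m + 1 + n) := rfl
    rw [h1] at hu
    erw [Linear.comp_units_smul] at hu
    rw [smul_eq_zero_iff_eq n.negOnePow] at hu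
    rw [show m + n + 1 = m + 1 + n by ring]
    exact hu
  obtain ⟨g, hg⟩ := hW (Xc.X i) (hXc i) (m + n) u hu'
  refine ⟨n.negOnePow • (g ≫ (W.XIsoOfEq (show m + n - 1 = m - 1 + n by ring)).hom), ?_⟩
  have h2 : (W⟦n⟧).d (m - 1) m = n.negOnePow • W.d (m - 1 + n) (m + n) := rfl
  rw [h2]
  erw [Linear.units_smul_comp, Linear.comp_units_smul]
  rw [smul_smul, Int.units_mul_self,
    one_smul]
  erw [Category.assoc, HomologicalComplex.XIsoOfEq_hom_comp_d, hg]
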